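/- Let F₁, F₂, F₃ be nonzero vectors in ℝ³ with F₁ + F₂ + F₃ = 0, and let P₁, P₂, P₃ be points of ℝ³ with P₁ × F₁ + P₂ × F₂ + P₃ × F₃ = 0 (where × denotes the cross product). Let Lⱼ = {Pⱼ + t·Fⱼ : t ∈ ℝ} be the line through Pⱼ with direction Fⱼ. Then there is an affine plane of ℝ³ containing L₁, L₂ and L₃; moreover, if F₁ and F₂ are linearly independent, then L₁, L₂ and L₃ have a common point, while if F₁ and F₂ are linearly dependent, then F₁, F₂, F₃ are pairwise linearly dependent (so the three lines are parallel). -/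

import Mathlib

open Matrix

section Stmt19Aux

lemma s19_cross_sub_left (a b c : Fin 3 → ℝ) : (a - b) ⨯₃ c = a ⨯₃ c - b ⨯₃ c := by
  funext i; fin_cases i <;> (simp [cross_apply]; try ring)

lemma s19_cross_smul_left (t : ℝ) (a b : Fin 3 → ℝ) : (t • a) ⨯₃ b = t • (a ⨯₃ b) := by
  funext i; fin_cases i <;> (simp [cross_apply]; try ring)

lemma s19_cross_add_left (a b c : Fin 3 → ℝ) : (a + b) ⨯₃ c = a ⨯₃ c + b ⨯₃ c := by
  funext i; fin_cases i <;> (simp [cross_apply]; try ring)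

lemma s19_cross_add_right (a b c : Fin 3 → ℝ) : a ⨯₃ (b + c) = a ⨯₃ b + a ⨯₃ c := by
  funext i; fin_cases i <;> (simp [cross_apply]; try ring)

lemma s19_cross_neg_right (a b : Fin 3 → ℝ) : a ⨯₃ (-b) = -(a ⨯₃ b) := by
  funext i; fin_cases i <;> (simp [cross_apply]; try ring)

lemma s19_cross_smul_right (t : ℝ) (a b : Fin 3 → ℝ) : a ⨯₃ (t • b) = t • (a ⨯₃ b) := by
  funext i; fin_cases i <;> (simp [cross_apply]; try ring)

lemma s19_cross_cross_left (a b : Fin 3 → ℝ) :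
    (a ⨯₃ b) ⨯₃ a = (a ⬝ᵥ a) • b - (a ⬝ᵥ b) • a := by
  funext i; fin_cases i <;>
    (simp [cross_apply, dotProduct, Fin.sum_univ_three]; try ring)

lemma s19_bac_cab (a b c : Fin 3 → ℝ) :
    a ⨯₃ (b ⨯₃ c) = (a ⬝ᵥ c) • b - (a ⬝ᵥ b) • c := by
  funext i; fin_cases i <;>
    (simp [cross_apply, dotProduct, Fin.sum_univ_three]; try ring)

lemma s19_dot_cross_swap (a b c : Fin 3 → ℝ) :
    (a ⨯₃ b) ⬝ᵥ c = -((a ⨯₃ c) ⬝ᵥ b) := by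
  simp [cross_apply, dotProduct, Fin.sum_univ_three]; ring

lemma s19_eq_smul_of_cross_eq_zero {b a : Fin 3 → ℝ} (hb : b ≠ 0) (h : b ⨯₃ a = 0) :
    ∃ t : ℝ, a = t • b := by
  refine ⟨(a ⬝ᵥ b) / (b ⬝ᵥ b), ?_⟩
  have hbb : b ⬝ᵥ b ≠ 0 := fun h0 => hb (dotProduct_self_eq_zero.mp h0)
  have h0 := congrFun h 0
  have h1 := congrFun h 1
  have h2 := congrFun h 2
  simp [cross_apply] at h0 h1 h2
  have hbb' : b 0 * b 0 + b 1 * b 1 + b 2 * b 2 ≠ 0 := by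
    simpa [dotProduct, Fin.sum_univ_three] using hbb
  funext i
  fin_cases i <;> simp [dotProduct, Fin.sum_univ_three] <;> rw [div_mul_eq_mul_div, eq_div_iff hbb']
  · linear_combination (- b 1) * h2 + b 2 * h1
  · linear_combination b 0 * h2 - b 2 * h0
  · linear_combination (- b 0) * h1 + b 1 * h0

lemma s19_not_li_of_smul {a b : Fin 3 → ℝ} (ha : a ≠ 0) (t : ℝ) (h : b = t • a) :
    ¬ LinearIndependent ℝ ![a, b] := by
  intro hli
  rw [linearIndependent_fin2] at hli
  obtain ⟨hb, hab⟩ := hli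
  simp only [Matrix.cons_val_one, Matrix.head_cons, Matrix.cons_val_zero] at hb hab
  rcases eq_or_ne t 0 with rfl | ht
  · exact hb (by simp [h])
  · exact hab t⁻¹ (by rw [h, smul_smul, inv_mul_cancel₀ ht, one_smul])

lemma s19_exists_smul_of_not_li {a b : Fin 3 → ℝ} (ha : a ≠ 0) (hb : b ≠ 0)
    (h : ¬ LinearIndependent ℝ ![a, b]) : ∃ t : ℝ, b = t • a := by
  rw [linearIndependent_fin2] at h
  push_neg at h
  simp only [Matrix.cons_val_one, Matrix.head_cons, Matrix.cons_val_zero] at h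
  rcases h hb with ⟨c, hc⟩
  have hc0 : c ≠ 0 := by rintro rfl; exact ha (by simp [← hc])
  exact ⟨c⁻¹, by rw [← hc, smul_smul, inv_mul_cancel₀ hc0, one_smul]⟩

lemma s19_mem_line {x P F : Fin 3 → ℝ} (hF : F ≠ 0) (h : x ⨯₃ F = P ⨯₃ F) :
    ∃ t : ℝ, x = P + t • F := by
  have h0 : F ⨯₃ (x - P) = 0 := by
    rw [← cross_anticomm, s19_cross_sub_left, h, sub_self, neg_zero]
  obtain ⟨t, ht⟩ := s19_eq_smul_of_cross_eq_zero hF h0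
  exact ⟨t, by rw [← ht]; abel⟩

end Stmt19Aux

/-- Proposition (troisminimale): if `F₁ + F₂ + F₃ = 0` (balancing of fluxes) and
`P₁ × F₁ + P₂ × F₂ + P₃ × F₃ = 0` (balancing of torques), then the axes
`Lⱼ = Pⱼ + ℝ Fⱼ` lie in a common affine plane, and are concurrent when `F₁, F₂`
are linearly independent, while all the `Fⱼ` are pairwise dependent (the lines
are parallel) otherwise. -/
theorem stmt19 (F₁ F₂ F₃ P₁ P₂ P₃ : Fin 3 → ℝ)
    (hF₁ : F₁ ≠ 0) (hF₂ : F₂ ≠ 0) (hF₃ : F₃ ≠ 0)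
    (hbalF : F₁ + F₂ + F₃ = 0)
    (hbalT : P₁ ⨯₃ F₁ + P₂ ⨯₃ F₂ + P₃ ⨯₃ F₃ = 0)
    (L₁ L₂ L₃ : Set (Fin 3 → ℝ))
    (hL₁ : L₁ = {x | ∃ t : ℝ, x = P₁ + t • F₁})
    (hL₂ : L₂ = {x | ∃ t : ℝ, x = P₂ + t • F₂})
    (hL₃ : L₃ = {x | ∃ t : ℝ, x = P₃ + t • F₃}) :
    (∃ (n : Fin 3 → ℝ) (d : ℝ), n ≠ 0 ∧ ∀ x ∈ L₁ ∪ L₂ ∪ L₃, n ⬝ᵥ x = d) ∧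
    (LinearIndependent ℝ ![F₁, F₂] → ∃ x, x ∈ L₁ ∧ x ∈ L₂ ∧ x ∈ L₃) ∧
    (¬ LinearIndependent ℝ ![F₁, F₂] →
      ¬ LinearIndependent ℝ ![F₁, F₂] ∧ ¬ LinearIndependent ℝ ![F₁, F₃] ∧
        ¬ LinearIndependent ℝ ![F₂, F₃]) := by
  subst hL₁ hL₂ hL₃
  have hF₃eq : F₃ = -(F₁ + F₂) := by linear_combination hbalF
  -- generic "plane" helper (as a `have`):
  have plane_of : ∀ n : Fin 3 → ℝ, n ⬝ᵥ F₁ = 0 → n ⬝ᵥ F₂ = 0 → n ⬝ᵥ F₃ = 0 →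
      n ⬝ᵥ P₁ = n ⬝ᵥ P₃ → n ⬝ᵥ P₂ = n ⬝ᵥ P₃ →
      ∀ x ∈ ({x | ∃ t : ℝ, x = P₁ + t • F₁} ∪ {x | ∃ t : ℝ, x = P₂ + t • F₂} ∪
        {x | ∃ t : ℝ, x = P₃ + t • F₃} : Set (Fin 3 → ℝ)), n ⬝ᵥ x = n ⬝ᵥ P₃ := by
    intro n h1 h2 h3 hp1 hp2 x hx
    rcases hx with (⟨t, rfl⟩ | ⟨t, rfl⟩) | ⟨t, rfl⟩ <;>
      simp [dotProduct_add, dotProduct_smul, h1, h2, h3, hp1, hp2, smul_eq_mul]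
  by_cases hLI : LinearIndependent ℝ ![F₁, F₂]
  · -- independent case
    set c₁ := P₁ ⨯₃ F₁ with hc₁
    set c₂ := P₂ ⨯₃ F₂ with hc₂
    have hc₃ : P₃ ⨯₃ F₃ = -(c₁ + c₂) := by linear_combination hbalT
    have hd1 : c₁ ⬝ᵥ F₁ = 0 := by rw [hc₁, dotProduct_comm]; exact dot_cross_self P₁ F₁
    have hd2 : c₂ ⬝ᵥ F₂ = 0 := by rw [hc₂, dotProduct_comm]; exact dot_cross_self P₂ F₂
    have key : c₁ ⬝ᵥ F₂ + c₂ ⬝ᵥ F₁ = 0 := by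
      have h3 : (P₃ ⨯₃ F₃) ⬝ᵥ F₃ = 0 := by
        rw [dotProduct_comm]; exact dot_cross_self P₃ F₃
      rw [hc₃, hF₃eq] at h3
      simp only [neg_dotProduct, dotProduct_neg, neg_neg, add_dotProduct,
        dotProduct_add] at h3
      linarith [h3, hd1, hd2]
    have hFF : F₁ ⬝ᵥ F₁ ≠ 0 := fun h0 => hF₁ (dotProduct_self_eq_zero.mp h0)
    set x₀ := (F₁ ⬝ᵥ F₁)⁻¹ • (F₁ ⨯₃ c₁) with hx₀
    have hx₀F₁ : x₀ ⨯₃ F₁ = c₁ := by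
      rw [hx₀, s19_cross_smul_left, s19_cross_cross_left]
      rw [show F₁ ⬝ᵥ c₁ = 0 from by rw [dotProduct_comm]; exact hd1]
      rw [zero_smul, sub_zero, smul_smul, inv_mul_cancel₀ hFF, one_smul]
    set N := F₁ ⨯₃ F₂ with hN'
    have hN : N ≠ 0 := by
      intro h0
      obtain ⟨t, ht⟩ := s19_eq_smul_of_cross_eq_zero hF₁ h0
      exact s19_not_li_of_smul hF₁ t ht hLI
    set r := c₂ - x₀ ⨯₃ F₂ with hr'
    have hrF₁ : r ⬝ᵥ F₁ = 0 := by
      rw [hr', sub_dotProduct]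
      have e1 : (x₀ ⨯₃ F₂) ⬝ᵥ F₁ = -((x₀ ⨯₃ F₁) ⬝ᵥ F₂) := s19_dot_cross_swap x₀ F₂ F₁
      rw [e1, hx₀F₁]
      linarith [key]
    have hrF₂ : r ⬝ᵥ F₂ = 0 := by
      rw [hr', sub_dotProduct, hd2]
      rw [show (x₀ ⨯₃ F₂) ⬝ᵥ F₂ = 0 from by
        rw [dotProduct_comm]; exact dot_cross_self x₀ F₂]
      ring
    have hrN : N ⨯₃ r = 0 := by
      rw [← cross_anticomm]
      rw [show r ⨯₃ N = 0 from by
        rw [hN', s19_bac_cab, hrF₂, hrF₁, zero_smul, zero_smul, sub_zero]]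
      simp
    obtain ⟨s, hs⟩ := s19_eq_smul_of_cross_eq_zero hN hrN
    set x := x₀ + s • F₁ with hx'
    have hxF₁ : x ⨯₃ F₁ = c₁ := by
      rw [hx', s19_cross_add_left, hx₀F₁, s19_cross_smul_left s F₁ F₁, cross_self,
        smul_zero, add_zero]
    have hxF₂ : x ⨯₃ F₂ = c₂ := by
      rw [hx', s19_cross_add_left, s19_cross_smul_left s F₁ F₂, ← hN', ← hs, hr']
      abel
    have hxF₃ : x ⨯₃ F₃ = P₃ ⨯₃ F₃ := by
      rw [hF₃eq, s19_cross_neg_right, s19_cross_add_right, hxF₁, hxF₂, ← hF₃eq, hc₃]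
    obtain ⟨t₁, ht₁⟩ := s19_mem_line hF₁ hxF₁
    obtain ⟨t₂, ht₂⟩ := s19_mem_line hF₂ hxF₂
    obtain ⟨t₃, ht₃⟩ := s19_mem_line hF₃ hxF₃
    have hNF₁ : N ⬝ᵥ F₁ = 0 := by
      rw [dotProduct_comm, hN']; exact dot_self_cross F₁ F₂
    have hNF₂ : N ⬝ᵥ F₂ = 0 := by
      rw [dotProduct_comm, hN']; exact dot_cross_self F₁ F₂
    have hNF₃ : N ⬝ᵥ F₃ = 0 := by
      rw [hF₃eq, dotProduct_neg, dotProduct_add, hNF₁, hNF₂]; ring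
    have hNP : ∀ (P F : Fin 3 → ℝ) (t : ℝ), N ⬝ᵥ F = 0 → x = P + t • F →
        N ⬝ᵥ P = N ⬝ᵥ x := by
      intro P F t hF hxP
      rw [hxP, dotProduct_add, dotProduct_smul, hF, smul_eq_mul, mul_zero, add_zero]
    refine ⟨⟨N, N ⬝ᵥ P₃, hN, ?_⟩, fun _ => ⟨x, ⟨t₁, ht₁⟩, ⟨t₂, ht₂⟩, ⟨t₃, ht₃⟩⟩,
      fun h => absurd hLI h⟩
    apply plane_of N hNF₁ hNF₂ hNF₃
    · rw [hNP P₁ F₁ t₁ hNF₁ ht₁, hNP P₃ F₃ t₃ hNF₃ ht₃]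
    · rw [hNP P₂ F₂ t₂ hNF₂ ht₂, hNP P₃ F₃ t₃ hNF₃ ht₃]
  · -- dependent case
    obtain ⟨t, ht⟩ := s19_exists_smul_of_not_li hF₁ hF₂ hLI
    have ht0 : t ≠ 0 := by rintro rfl; exact hF₂ (by simp [ht])
    have hF₃' : F₃ = (-(1 + t)) • F₁ := by
      rw [hF₃eq, ht]; funext i; simp [neg_smul, add_smul]; ring
    have h1t : -(1 + t) ≠ 0 := by
      intro h0; exact hF₃ (by rw [hF₃', h0, zero_smul])
    have hdep : ¬ LinearIndependent ℝ ![F₁, F₂] ∧ ¬ LinearIndependent ℝ ![F₁, F₃] ∧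
        ¬ LinearIndependent ℝ ![F₂, F₃] := by
      refine ⟨hLI, s19_not_li_of_smul hF₁ _ hF₃', s19_not_li_of_smul hF₂ (-(1+t)/t) ?_⟩
      rw [hF₃', ht, smul_smul]
      congr 1
      field_simp
    -- torque gives coplanarity of the parallel lines
    have hQ : F₁ ⨯₃ (P₁ + t • P₂ + (-(1 + t)) • P₃) = 0 := by
      have h0 : (P₁ + t • P₂ + (-(1 + t)) • P₃) ⨯₃ F₁ = 0 := by
        have := hbalT
        rw [ht, hF₃', s19_cross_smul_right, s19_cross_smul_right] at this
        rw [s19_cross_add_left, s19_cross_add_left, s19_cross_smul_left,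
          s19_cross_smul_left]
        exact this
      rw [← cross_anticomm, h0, neg_zero]
    obtain ⟨μ, hμ⟩ := s19_eq_smul_of_cross_eq_zero hF₁ hQ
    -- P₂ - P₃ = t⁻¹ • (μ • F₁ - (P₁ - P₃))
    have hP₂ : P₂ - P₃ = t⁻¹ • (μ • F₁ - (P₁ - P₃)) := by
      funext i
      have h := congrFun hμ i
      simp only [Pi.add_apply, Pi.smul_apply, Pi.sub_apply, Pi.neg_apply,
        smul_eq_mul, neg_mul] at h ⊢
      field_simp
      linear_combination h
    -- find the normal vector n
    have hnex : ∃ n : Fin 3 → ℝ, n ≠ 0 ∧ n ⬝ᵥ F₁ = 0 ∧ n ⬝ᵥ (P₁ - P₃) = 0 ∧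
        n ⬝ᵥ (P₂ - P₃) = 0 := by
      by_cases hc : F₁ ⨯₃ (P₁ - P₃) = 0
      · obtain ⟨sv, hsv⟩ := s19_eq_smul_of_cross_eq_zero hF₁ hc
        have hex : ∃ n : Fin 3 → ℝ, n ≠ 0 ∧ n ⬝ᵥ F₁ = 0 := by
          by_cases h01 : F₁ 0 = 0 ∧ F₁ 1 = 0
          · refine ⟨![1, 0, 0], ?_, ?_⟩
            · intro h0; simpa using congrFun h0 0
            · simp [dotProduct, Fin.sum_univ_three, h01.1]
          · refine ⟨![-(F₁ 1), F₁ 0, 0], ?_, ?_⟩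
            · intro h0
              push_neg at h01
              have e0 := congrFun h0 0
              have e1 := congrFun h0 1
              simp at e0 e1
              exact h01 e1 e0
            · simp [dotProduct, Fin.sum_univ_three]; ring
        obtain ⟨n, hn0, hnF⟩ := hex
        refine ⟨n, hn0, hnF, ?_, ?_⟩
        · rw [hsv, dotProduct_smul, hnF, smul_eq_mul, mul_zero]
        · rw [hP₂, hsv, dotProduct_smul, dotProduct_sub, dotProduct_smul,
            dotProduct_smul, hnF]
          simp
      · refine ⟨F₁ ⨯₃ (P₁ - P₃), hc, ?_, ?_, ?_⟩
        · rw [dotProduct_comm]; exact dot_self_cross F₁ (P₁ - P₃)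
        · rw [dotProduct_comm]; exact dot_cross_self F₁ (P₁ - P₃)
        · have e1 : (F₁ ⨯₃ (P₁ - P₃)) ⬝ᵥ F₁ = 0 := by
            rw [dotProduct_comm]; exact dot_self_cross F₁ (P₁ - P₃)
          have e2 : (F₁ ⨯₃ (P₁ - P₃)) ⬝ᵥ (P₁ - P₃) = 0 := by
            rw [dotProduct_comm]; exact dot_cross_self F₁ (P₁ - P₃)
          rw [hP₂, dotProduct_smul, dotProduct_sub, dotProduct_smul, e1, e2]
          simp
    obtain ⟨n, hn0, hnF₁, hnP₁, hnP₂⟩ := hnex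
    have hnF₂ : n ⬝ᵥ F₂ = 0 := by
      rw [ht, dotProduct_smul, hnF₁, smul_eq_mul, mul_zero]
    have hnF₃ : n ⬝ᵥ F₃ = 0 := by
      rw [hF₃', dotProduct_smul, hnF₁, smul_eq_mul, mul_zero]
    have hp1 : n ⬝ᵥ P₁ = n ⬝ᵥ P₃ := by
      have := hnP₁; rw [dotProduct_sub] at this; linarith
    have hp2 : n ⬝ᵥ P₂ = n ⬝ᵥ P₃ := by
      have := hnP₂; rw [dotProduct_sub] at this; linarith
    exact ⟨⟨n, n ⬝ᵥ P₃, hn0, plane_of n hnF₁ hnF₂ hnF₃ hp1 hp2⟩,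
      fun h => absurd h hLI, fun _ => hdep⟩
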